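/- Under the adaptive-stencil mesh setup, assume u_{i+1} ≠ u_i. Define the bound sequences by the data-bounded initialization B_1^− = −d_1 and B_1^+ = d_1, and for 2 ≤ j ≤ n−1: if t_j ≤ 0 then B_j^− = (B_{j−1}^− − λ̄_{j−1})·d_j/(1−t_j) and B_j^+ = (B_{j−1}^+ − λ̄_{j−1})·d_j/(1−t_j); if t_j ≥ 1 then B_j^− = (B_{j−1}^+ − λ̄_{j−1})·d_j/(−t_j) and B_j^+ = (B_{j−1}^− − λ̄_{j−1})·d_j/(−t_j). If B_j^− ≤ λ̄_j ≤ B_j^+ for every 1 ≤ j ≤ n−1, then for every x ∈ [x_i, x_{i+1}], min(u_i, u_{i+1}) ≤ U_n(x) ≤ max(u_i, u_{i+1}); i.e., the interpolant is bounded by the data values at the endpoints of the base interval. -/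

import Mathlib

/-- Divided differences over consecutive nodes: `divdiff x u k m = U[x_k, …, x_{k+m}]`. -/
noncomputable def divdiff (x u : ℕ → ℝ) : ℕ → ℕ → ℝ
  | k, 0 => u k
  | k, m + 1 => (divdiff x u (k + 1) m - divdiff x u k m) / (x (k + m + 1) - x k)

/-- `stMin e j = min{e_0, …, e_j}`. -/
def stMin (e : ℕ → ℕ) (j : ℕ) : ℕ := (Finset.range (j + 1)).inf' Finset.nonempty_range_add_one e

/-- `stMax e j = max{e_0, …, e_j}`. -/
def stMax (e : ℕ → ℕ) (j : ℕ) : ℕ := (Finset.range (j + 1)).sup' Finset.nonempty_range_add_one e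

/-- `U[V_j]`: the divided difference over the consecutive nodes of the stencil
`V_j = {e_0, …, e_{j+1}}`, from its leftmost node `x_j^l` to its rightmost node `x_j^r`. -/
noncomputable def UV (x u : ℕ → ℝ) (e : ℕ → ℕ) (j : ℕ) : ℝ :=
  divdiff x u (stMin e (j + 1)) (stMax e (j + 1) - stMin e (j + 1))

/-- The Newton interpolant of degree `n` on the adaptive stencil:
`U_n(y) = u_i + Σ_{j=0}^{n−1} U[V_j] · Π_{k=0}^{j} (y − x_{e_k})`. -/
noncomputable def Un (x u : ℕ → ℝ) (e : ℕ → ℕ) (i n : ℕ) (y : ℝ) : ℝ :=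
  u i + ∑ j ∈ Finset.range n, UV x u e j * ∏ k ∈ Finset.range (j + 1), (y - x (e k))

/-- Normalized stencil width `d_j = (x_j^r − x_j^l)/(x_{i+1} − x_i)`. -/
noncomputable def dN (x : ℕ → ℝ) (e : ℕ → ℕ) (i j : ℕ) : ℝ :=
  (x (stMax e (j + 1)) - x (stMin e (j + 1))) / (x (i + 1) - x i)

/-- Normalized position `t_j = (x_{e_j} − x_i)/(x_{i+1} − x_i)` of the added stencil point. -/
noncomputable def tN (x : ℕ → ℝ) (e : ℕ → ℕ) (i j : ℕ) : ℝ :=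
  (x (e j) - x i) / (x (i + 1) - x i)

/-- Scaled divided-difference ratio
`λ̄_j = (U[V_j]/U[x_i, x_{i+1}]) · Π_{k=1}^{j} (x_k^r − x_k^l)`. -/
noncomputable def lamBar (x u : ℕ → ℝ) (e : ℕ → ℕ) (i j : ℕ) : ℝ :=
  (UV x u e j / divdiff x u i 1) *
    ∏ k ∈ Finset.Icc 1 j, (x (stMax e (k + 1)) - x (stMin e (k + 1)))

/-- The expanded normalized Newton form
`S_n(s) = s + Σ_{j=1}^{n−1} (λ̄_j / (d_1⋯d_j)) · s·(s−1) · Π_{k=2}^{j} (s − t_k)`. -/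
noncomputable def Sn (n : ℕ) (d t lam : ℕ → ℝ) (s : ℝ) : ℝ :=
  s + ∑ j ∈ Finset.Icc 1 (n - 1),
    (lam j / ∏ k ∈ Finset.Icc 1 j, d k) * (s * (s - 1)) * ∏ k ∈ Finset.Icc 2 j, (s - t k)

/-- Data-bounded interpolation theorem on the adaptive stencil: if the scaled
divided-difference ratios satisfy the recursive bounds with data-bounded initialization
`B_1^∓ = ∓d_1`, then the interpolant is bounded by the data values at the endpoints of the
base interval. -/
noncomputable def Ptail (c t : ℕ → ℝ) (s : ℝ) (ntop m : ℕ) : ℝ :=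
  ∑ j ∈ Finset.Icc m ntop, c j * ∏ k ∈ Finset.Icc (m + 1) j, (s - t k)

lemma Ptail_rec (c t : ℕ → ℝ) (s : ℝ) (ntop m : ℕ) (hm : m ≤ ntop) :
    Ptail c t s ntop m = c m + (s - t (m + 1)) * Ptail c t s ntop (m + 1) := by
  unfold Ptail
  rw [show Finset.Icc m ntop = insert m (Finset.Icc (m + 1) ntop) from by
        ext a; simp; omega,
      Finset.sum_insert (by simp)]
  rw [show Finset.Icc (m + 1) m = ∅ from Finset.Icc_eq_empty (by omega)]
  simp only [Finset.prod_empty, mul_one]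
  congr 1
  rw [Finset.mul_sum]
  refine Finset.sum_congr rfl ?_
  intro j hj
  simp only [Finset.mem_Icc] at hj
  rw [show Finset.Icc (m + 1) j = insert (m + 1) (Finset.Icc (m + 2) j) from by
        ext a; simp; omega,
      Finset.prod_insert (by simp)]
  ring

lemma Ptail_top (c t : ℕ → ℝ) (s : ℝ) (ntop : ℕ) : Ptail c t s ntop ntop = c ntop := by
  unfold Ptail
  rw [Finset.Icc_self, Finset.sum_singleton,
    show Finset.Icc (ntop + 1) ntop = ∅ from Finset.Icc_eq_empty (by omega)]
  simp

lemma tail_bounds (ntop : ℕ) (c t βm βp : ℕ → ℝ)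
    (hβ1m : βm 1 = -1) (hβ1p : βp 1 = 1)
    (ht : ∀ j, 1 ≤ j → j + 1 ≤ ntop → t (j + 1) ≤ 0 ∨ 1 ≤ t (j + 1))
    (hrec0 : ∀ j, 1 ≤ j → j + 1 ≤ ntop → t (j + 1) ≤ 0 →
      βm (j + 1) = (βm j - c j) / (1 - t (j + 1)) ∧
      βp (j + 1) = (βp j - c j) / (1 - t (j + 1)))
    (hrec1 : ∀ j, 1 ≤ j → j + 1 ≤ ntop → 1 ≤ t (j + 1) →
      βm (j + 1) = (βp j - c j) / (-t (j + 1)) ∧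
      βp (j + 1) = (βm j - c j) / (-t (j + 1)))
    (hc : ∀ j, 1 ≤ j → j ≤ ntop → βm j ≤ c j ∧ c j ≤ βp j)
    (s : ℝ) (hs0 : 0 ≤ s) (hs1 : s ≤ 1) (h1top : 1 ≤ ntop) :
    -1 ≤ Ptail c t s ntop 1 ∧ Ptail c t s ntop 1 ≤ 1 := by
  -- sign of the bounds
  have hsign : ∀ j, 1 ≤ j → j ≤ ntop → βm j ≤ 0 ∧ 0 ≤ βp j := by
    intro j
    induction j with
    | zero => omega
    | succ j ih =>
      intro h1 h2
      rcases Nat.eq_or_lt_of_le h1 with h | h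
      · constructor <;> simp [← h, hβ1m, hβ1p]
      · have hj1 : 1 ≤ j := by omega
        have hjt : j ≤ ntop := by omega
        obtain ⟨hm0, hp0⟩ := ih hj1 hjt
        obtain ⟨hcm, hcp⟩ := hc j hj1 hjt
        rcases ht j hj1 h2 with hτ | hτ
        · obtain ⟨em, ep⟩ := hrec0 j hj1 h2 hτ
          have hpos : (0:ℝ) < 1 - t (j + 1) := by linarith
          constructor
          · rw [em]; exact div_nonpos_of_nonpos_of_nonneg (by linarith) (by linarith)
          · rw [ep]; exact div_nonneg (by linarith) (by linarith)
        · obtain ⟨em, ep⟩ := hrec1 j hj1 h2 hτ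
          have hneg : -t (j + 1) < 0 := by linarith
          constructor
          · rw [em]; exact div_nonpos_of_nonneg_of_nonpos (by linarith) (by linarith)
          · rw [ep, div_nonneg_iff]; right; constructor <;> linarith
  -- downward induction
  have key : ∀ q m, m + q = ntop → 1 ≤ m →
      βm m ≤ Ptail c t s ntop m ∧ Ptail c t s ntop m ≤ βp m := by
    intro q
    induction q with
    | zero =>
      intro m hm h1m
      have : m = ntop := by omega
      subst this
      rw [Ptail_top]
      exact hc m h1m le_rfl
    | succ q ih =>
      intro m hm h1m
      have hm1 : m + 1 ≤ ntop := by omega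
      obtain ⟨ihm, ihp⟩ := ih (m + 1) (by omega) (by omega)
      rw [Ptail_rec c t s ntop m (by omega)]
      set τ := t (m + 1) with hτdef
      set P := Ptail c t s ntop (m + 1) with hPdef
      obtain ⟨hm0', hp0'⟩ := hsign (m + 1) (by omega) hm1
      rcases ht m h1m hm1 with hτ | hτ
      · obtain ⟨em, ep⟩ := hrec0 m h1m hm1 hτ
        have hpos : (0:ℝ) < 1 - τ := by linarith
        have em' : βm m = c m + (1 - τ) * βm (m + 1) := by
          rw [em, ← hτdef]; field_simp [hpos.ne'] <;> ring
        have ep' : βp m = c m + (1 - τ) * βp (m + 1) := by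
          rw [ep, ← hτdef]; field_simp [hpos.ne'] <;> ring
        constructor
        · rw [em']
          nlinarith [mul_nonneg (by linarith : (0:ℝ) ≤ s - τ) (by linarith : 0 ≤ P - βm (m + 1)),
            mul_nonneg (by linarith : (0:ℝ) ≤ 1 - s) (by linarith : 0 ≤ -βm (m + 1))]
        · rw [ep']
          nlinarith [mul_nonneg (by linarith : (0:ℝ) ≤ s - τ) (by linarith : 0 ≤ βp (m + 1) - P),
            mul_nonneg (by linarith : (0:ℝ) ≤ 1 - s) (by linarith : 0 ≤ βp (m + 1))]
      · obtain ⟨em, ep⟩ := hrec1 m h1m hm1 hτ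
        have hne : -τ ≠ 0 := by intro h; simp at h; linarith
        have em' : βm m = c m + (-τ) * βp (m + 1) := by
          rw [ep, ← hτdef]; field_simp [neg_ne_zero.mp hne] <;> ring
        have ep' : βp m = c m + (-τ) * βm (m + 1) := by
          rw [em, ← hτdef]; field_simp [neg_ne_zero.mp hne] <;> ring
        constructor
        · rw [em']
          nlinarith [mul_nonneg (by linarith : (0:ℝ) ≤ τ - s) (by linarith : 0 ≤ βp (m + 1) - P),
            mul_nonneg hs0 hp0']
        · rw [ep']
          nlinarith [mul_nonneg (by linarith : (0:ℝ) ≤ τ - s) (by linarith : 0 ≤ P - βm (m + 1)),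
            mul_nonneg hs0 (by linarith : 0 ≤ -βm (m + 1))]
  obtain ⟨h1, h2⟩ := key (ntop - 1) 1 (by omega) le_rfl
  rw [hβ1m] at h1; rw [hβ1p] at h2
  exact ⟨h1, h2⟩

set_option maxHeartbeats 2000000 in
theorem dbi_interpolant_bounds
    (N n i : ℕ) (hn : 2 ≤ n) (hiN : i + 1 ≤ N)
    (x u : ℕ → ℝ)
    (hx : ∀ k, k < N → x k < x (k + 1))
    (e : ℕ → ℕ)
    (he0 : e 0 = i) (he1 : e 1 = i + 1)
    (heN : ∀ j, j ≤ n → e j ≤ N)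
    (heStep : ∀ j, 2 ≤ j → j ≤ n →
      e j + 1 = stMin e (j - 1) ∨ e j = stMax e (j - 1) + 1)
    (hu : u (i + 1) ≠ u i)
    (Bm Bp : ℕ → ℝ)
    (hBm1 : Bm 1 = -dN x e i 1)
    (hBp1 : Bp 1 = dN x e i 1)
    (hBrec : ∀ j, 2 ≤ j → j ≤ n - 1 →
      (tN x e i j ≤ 0 →
        Bm j = (Bm (j - 1) - lamBar x u e i (j - 1)) * dN x e i j / (1 - tN x e i j) ∧
        Bp j = (Bp (j - 1) - lamBar x u e i (j - 1)) * dN x e i j / (1 - tN x e i j)) ∧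
      (1 ≤ tN x e i j →
        Bm j = (Bp (j - 1) - lamBar x u e i (j - 1)) * dN x e i j / (-tN x e i j) ∧
        Bp j = (Bm (j - 1) - lamBar x u e i (j - 1)) * dN x e i j / (-tN x e i j)))
    (hlam : ∀ j, 1 ≤ j → j ≤ n - 1 →
      Bm j ≤ lamBar x u e i j ∧ lamBar x u e i j ≤ Bp j)
    :
    ∀ y ∈ Set.Icc (x i) (x (i + 1)),
      min (u i) (u (i + 1)) ≤ Un x u e i n y ∧
        Un x u e i n y ≤ max (u i) (u (i + 1)) := by
  have hh : 0 < x (i + 1) - x i := sub_pos.2 (hx i (by omega))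
  have hΔ : u (i + 1) - u i ≠ 0 := sub_ne_zero.2 hu
  have hxlt : ∀ a b : ℕ, a < b → b ≤ N → x a < x b := by
    intro a b hab hbN
    induction b with
    | zero => omega
    | succ b ih =>
      rcases Nat.lt_succ_iff_lt_or_eq.mp hab with h' | h'
      · exact lt_trans (ih h' (by omega)) (hx b (by omega))
      · subst h'; exact hx a (by omega)
  have hmin_le : ∀ m : ℕ, stMin e m ≤ i := by
    intro m
    have h0 : (0 : ℕ) ∈ Finset.range (m + 1) := by simp
    calc stMin e m ≤ e 0 := Finset.inf'_le e h0
    _ = i := he0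
  have hmax_ge : ∀ m : ℕ, 1 ≤ m → i + 1 ≤ stMax e m := by
    intro m hm
    have h1 : (1 : ℕ) ∈ Finset.range (m + 1) := by simp; omega
    calc i + 1 = e 1 := he1.symm
    _ ≤ stMax e m := Finset.le_sup' e h1
  have hmax_le : ∀ m, m ≤ n → stMax e m ≤ N := by
    intro m hm
    apply Finset.sup'_le
    intro b hb
    simp only [Finset.mem_range] at hb
    exact heN b (by omega)
  have hW : ∀ k, 1 ≤ k → k + 1 ≤ n → 0 < x (stMax e (k + 1)) - x (stMin e (k + 1)) := by
    intro k hk hk1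
    refine sub_pos.2 (hxlt _ _ ?_ (hmax_le _ hk1))
    have h1 := hmin_le (k + 1)
    have h2 := hmax_ge (k + 1) (by omega)
    omega
  have hmin1 : stMin e 1 = i := by
    refine le_antisymm (hmin_le 1) (Finset.le_inf' _ _ ?_)
    intro b hb
    simp only [Finset.mem_range] at hb
    interval_cases b <;> simp [he0, he1]
  have hmax1 : stMax e 1 = i + 1 := by
    refine le_antisymm (Finset.sup'_le _ _ ?_) (hmax_ge 1 le_rfl)
    intro b hb
    simp only [Finset.mem_range] at hb
    interval_cases b <;> simp [he0, he1]
  have hDD : divdiff x u i 1 = (u (i + 1) - u i) / (x (i + 1) - x i) := by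
    simp [divdiff]
  have hUV0 : UV x u e 0 = (u (i + 1) - u i) / (x (i + 1) - x i) := by
    unfold UV
    rw [hmin1, hmax1, show i + 1 - i = 1 from by omega]
    exact hDD
  have ht0 : tN x e i 0 = 0 := by simp [tN, he0]
  have ht1 : tN x e i 1 = 1 := by rw [tN, he1]; exact div_self hh.ne'
  have hd : ∀ k, 1 ≤ k → k ≤ n - 1 → 0 < dN x e i k := by
    intro k hk hk'
    exact div_pos (hW k hk (by omega)) hh
  have hD : ∀ j, j ≤ n - 1 → 0 < ∏ k ∈ Finset.Icc 1 j, dN x e i k := by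
    intro j hj
    apply Finset.prod_pos
    intro k hk
    simp only [Finset.mem_Icc] at hk
    exact hd k hk.1 (le_trans hk.2 hj)
  have hDsucc : ∀ j : ℕ, (∏ k ∈ Finset.Icc 1 (j + 1), dN x e i k)
      = (∏ k ∈ Finset.Icc 1 j, dN x e i k) * dN x e i (j + 1) := by
    intro j
    exact Finset.prod_Icc_succ_top (by omega) _
  -- normalized position of added points is outside (0,1)
  have htout : ∀ j, 1 ≤ j → j + 1 ≤ n - 1 →
      tN x e i (j + 1) ≤ 0 ∨ 1 ≤ tN x e i (j + 1) := by
    intro j hj hj1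
    rcases heStep (j + 1) (by omega) (by omega) with hcase | hcase
    · left
      rw [show j + 1 - 1 = j from by omega] at hcase
      have hlt : e (j + 1) < i := by
        have := hmin_le j; omega
      have : x (e (j + 1)) < x i := hxlt _ _ hlt (by omega)
      rw [tN]
      apply div_nonpos_of_nonpos_of_nonneg <;> linarith
    · right
      rw [show j + 1 - 1 = j from by omega] at hcase
      have hgt : i + 1 < e (j + 1) := by
        have := hmax_ge j (by omega); omega
      have : x (i + 1) < x (e (j + 1)) := hxlt _ _ hgt (heN _ (by omega))
      rw [tN, le_div_iff₀ hh]
      linarith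
  -- translated bounds
  have hβm1 : (fun j => Bm j / ∏ k ∈ Finset.Icc 1 j, dN x e i k) 1 = -1 := (by
        simp only [Finset.Icc_self, Finset.prod_singleton, hBm1]
        rw [neg_div, div_self (hd 1 le_rfl (by omega)).ne'])
  have hβp1 : (fun j => Bp j / ∏ k ∈ Finset.Icc 1 j, dN x e i k) 1 = 1 := (by
        simp only [Finset.Icc_self, Finset.prod_singleton, hBp1]
        rw [div_self (hd 1 le_rfl (by omega)).ne'])
  have hrecA : ∀ j, 1 ≤ j → j + 1 ≤ n - 1 → tN x e i (j + 1) ≤ 0 →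
      Bm (j + 1) / ∏ k ∈ Finset.Icc 1 (j + 1), dN x e i k =
        (Bm j / (∏ k ∈ Finset.Icc 1 j, dN x e i k) -
          lamBar x u e i j / ∏ k ∈ Finset.Icc 1 j, dN x e i k) / (1 - tN x e i (j + 1)) ∧
      Bp (j + 1) / ∏ k ∈ Finset.Icc 1 (j + 1), dN x e i k =
        (Bp j / (∏ k ∈ Finset.Icc 1 j, dN x e i k) -
          lamBar x u e i j / ∏ k ∈ Finset.Icc 1 j, dN x e i k) / (1 - tN x e i (j + 1)) := (by
        intro j hj hj1 hτ
        obtain ⟨em, ep⟩ := (hBrec (j + 1) (by omega) hj1).1 hτ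
        rw [show j + 1 - 1 = j from by omega] at em ep
        have hDj := (hD j (by omega)).ne'
        have hdj := (hd (j + 1) (by omega) hj1).ne'
        have hne : (1 : ℝ) - tN x e i (j + 1) ≠ 0 := by intro hc; apply absurd hτ; simp; linarith [sub_eq_zero.mp hc]
        constructor
        · simp only [hDsucc, em]
          field_simp
        · simp only [hDsucc, ep]
          field_simp)
  have hrecB : ∀ j, 1 ≤ j → j + 1 ≤ n - 1 → 1 ≤ tN x e i (j + 1) →
      Bm (j + 1) / ∏ k ∈ Finset.Icc 1 (j + 1), dN x e i k =
        (Bp j / (∏ k ∈ Finset.Icc 1 j, dN x e i k) -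
          lamBar x u e i j / ∏ k ∈ Finset.Icc 1 j, dN x e i k) / (-tN x e i (j + 1)) ∧
      Bp (j + 1) / ∏ k ∈ Finset.Icc 1 (j + 1), dN x e i k =
        (Bm j / (∏ k ∈ Finset.Icc 1 j, dN x e i k) -
          lamBar x u e i j / ∏ k ∈ Finset.Icc 1 j, dN x e i k) / (-tN x e i (j + 1)) := (by
        intro j hj hj1 hτ
        obtain ⟨em, ep⟩ := (hBrec (j + 1) (by omega) hj1).2 hτ
        rw [show j + 1 - 1 = j from by omega] at em ep
        have hDj := (hD j (by omega)).ne'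
        have hdj := (hd (j + 1) (by omega) hj1).ne'
        have hne : -tN x e i (j + 1) ≠ 0 := by intro hc; simp at hc; linarith
        constructor
        · simp only [hDsucc, em]
          field_simp
        · simp only [hDsucc, ep]
          field_simp)
  have hcb : ∀ j, 1 ≤ j → j ≤ n - 1 →
      Bm j / (∏ k ∈ Finset.Icc 1 j, dN x e i k) ≤
        lamBar x u e i j / ∏ k ∈ Finset.Icc 1 j, dN x e i k ∧
      lamBar x u e i j / (∏ k ∈ Finset.Icc 1 j, dN x e i k) ≤
        Bp j / ∏ k ∈ Finset.Icc 1 j, dN x e i k := (by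
        intro j hj hj1
        obtain ⟨h1, h2⟩ := hlam j hj hj1
        have hDj := hD j hj1
        exact ⟨(div_le_div_iff_of_pos_right hDj).2 h1, (div_le_div_iff_of_pos_right hDj).2 h2⟩)
  intro y hy
  obtain ⟨hy1, hy2⟩ := hy
  set s : ℝ := (y - x i) / (x (i + 1) - x i) with hsdef
  have hs0 : 0 ≤ s := div_nonneg (by linarith) hh.le
  have hs1 : s ≤ 1 := by rw [hsdef, div_le_one hh]; linarith
  obtain ⟨hQ1, hQ2⟩ := tail_bounds (n - 1)
      (fun j => lamBar x u e i j / ∏ k ∈ Finset.Icc 1 j, dN x e i k)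
      (tN x e i)
      (fun j => Bm j / ∏ k ∈ Finset.Icc 1 j, dN x e i k)
      (fun j => Bp j / ∏ k ∈ Finset.Icc 1 j, dN x e i k)
      hβm1 hβp1 htout hrecA hrecB hcb s hs0 hs1 (by omega)
  set Q := Ptail (fun j => lamBar x u e i j / ∏ k ∈ Finset.Icc 1 j, dN x e i k)
      (tN x e i) s (n - 1) 1 with hQdef
  have hsmul : (x (i + 1) - x i) * s = y - x i := by
    rw [hsdef]; field_simp
  have hfac : ∀ k : ℕ, y - x (e k) = (x (i + 1) - x i) * (s - tN x e i k) := by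
    intro k
    rw [tN, mul_sub, hsmul]
    have hc : (x (i + 1) - x i) * ((x (e k) - x i) / (x (i + 1) - x i)) = x (e k) - x i := by
      field_simp
    rw [hc]; ring
  have hident : Un x u e i n y = u i + (u (i + 1) - u i) *
      Sn n (dN x e i) (tN x e i) (lamBar x u e i) s := by
    unfold Un Sn
    rw [show Finset.range n = insert 0 (Finset.Icc 1 (n - 1)) from by ext a; simp; omega,
        Finset.sum_insert (by simp)]
    have h0 : UV x u e 0 * ∏ k ∈ Finset.range (0 + 1), (y - x (e k)) =
        (u (i + 1) - u i) * s := by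
      have hr1 : ∏ k ∈ Finset.range (0 + 1), (y - x (e k)) = y - x i := by simp [he0]
      rw [hUV0, hr1, hsdef]; ring
    rw [h0, mul_add, Finset.mul_sum]
    congr 1
    congr 1
    refine Finset.sum_congr rfl ?_
    intro j hj
    simp only [Finset.mem_Icc] at hj
    have hprod : ∏ k ∈ Finset.range (j + 1), (y - x (e k)) =
        (x (i + 1) - x i) ^ (j + 1) *
          ((s * (s - 1)) * ∏ k ∈ Finset.Icc 2 j, (s - tN x e i k)) := by
      rw [Finset.prod_congr rfl (fun k _ => hfac k), Finset.prod_mul_distrib,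
          Finset.prod_const, Finset.card_range]
      congr 1
      rw [show Finset.range (j + 1) = insert 0 (insert 1 (Finset.Icc 2 j)) from by
            ext a; simp; omega,
          Finset.prod_insert (by simp), Finset.prod_insert (by simp)]
      rw [ht0, ht1]
      ring
    have hWp : 0 < ∏ k ∈ Finset.Icc 1 j, (x (stMax e (k + 1)) - x (stMin e (k + 1))) := by
      apply Finset.prod_pos
      intro k hk
      simp only [Finset.mem_Icc] at hk
      exact hW k hk.1 (by omega)
    have hDprod : ∏ k ∈ Finset.Icc 1 j, dN x e i k =
        (∏ k ∈ Finset.Icc 1 j, (x (stMax e (k + 1)) - x (stMin e (k + 1)))) /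
          (x (i + 1) - x i) ^ j := by
      unfold dN
      rw [Finset.prod_div_distrib, Finset.prod_const, Nat.card_Icc]
      norm_num
    have hcoef : (u (i + 1) - u i) *
        (lamBar x u e i j / ∏ k ∈ Finset.Icc 1 j, dN x e i k) =
        UV x u e j * (x (i + 1) - x i) ^ (j + 1) := by
      rw [hDprod]
      unfold lamBar
      rw [hDD]
      field_simp
      ring
    rw [hprod]
    linear_combination (-(s * (s - 1) * ∏ k ∈ Finset.Icc 2 j, (s - tN x e i k))) * hcoef
  have hSn : Sn n (dN x e i) (tN x e i) (lamBar x u e i) s = s + (s * (s - 1)) * Q := by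
    rw [hQdef]
    unfold Sn Ptail
    rw [Finset.mul_sum]
    congr 1
    refine Finset.sum_congr rfl ?_
    intro j hj
    norm_num
    ring
  have hSb0 : 0 ≤ s + (s * (s - 1)) * Q := by
    nlinarith [mul_nonneg (mul_nonneg hs0 (by linarith : (0:ℝ) ≤ 1 - s))
        (by linarith : (0:ℝ) ≤ 1 - Q), sq_nonneg s]
  have hSb1 : s + (s * (s - 1)) * Q ≤ 1 := by
    nlinarith [mul_nonneg (mul_nonneg hs0 (by linarith : (0:ℝ) ≤ 1 - s))
        (by linarith : (0:ℝ) ≤ Q + 1), sq_nonneg (1 - s)]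
  rw [hident, hSn]
  constructor
  · rcases le_total (u i) (u (i + 1)) with hle | hle
    · rw [min_eq_left hle]
      nlinarith [mul_nonneg (by linarith : (0:ℝ) ≤ u (i + 1) - u i) hSb0]
    · rw [min_eq_right hle]
      nlinarith [mul_nonneg (by linarith : (0:ℝ) ≤ u i - u (i + 1))
          (by linarith : (0:ℝ) ≤ 1 - (s + (s * (s - 1)) * Q))]
  · rcases le_total (u i) (u (i + 1)) with hle | hle
    · rw [max_eq_right hle]
      nlinarith [mul_nonneg (by linarith : (0:ℝ) ≤ u (i + 1) - u i)
          (by linarith : (0:ℝ) ≤ 1 - (s + (s * (s - 1)) * Q))]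
    · rw [max_eq_left hle]
      nlinarith [mul_nonneg (by linarith : (0:ℝ) ≤ u i - u (i + 1)) hSb0]
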